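/- Suppose E[V − τ] < 0. If Y : Ω → [0,∞) is a measurable random variable satisfying Y ∘ θ = ψ(Y, ·) P-a.s., then P( Y ≤ σ + D + V ) > 0. -/

import Mathlib

open MeasureTheory Filter

noncomputable section

variable {Ω : Type*}

/-- ψ(y, ω) = max( max( y + V ω, σ ω + D ω + V ω ) − τ ω, 0 ). -/
def psi (σ D V τ : Ω → ℝ) (y : ℝ) (ω : Ω) : ℝ :=
  max (max (y + V ω) (σ ω + D ω + V ω) - τ ω) 0

/-- S_j(ω) = σ(θ^{-j}ω) + D(θ^{-j}ω) + Σ_{i=1}^{j} V(θ^{-i}ω) − Σ_{i=1}^{j} τ(θ^{-i}ω),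
where `θi` denotes the inverse of `θ`. -/
def Sj (θi : Ω → Ω) (σ D V τ : Ω → ℝ) (j : ℕ) (ω : Ω) : ℝ :=
  σ (θi^[j] ω) + D (θi^[j] ω)
    + ∑ i ∈ Finset.Icc 1 j, V (θi^[i] ω)
    - ∑ i ∈ Finset.Icc 1 j, τ (θi^[i] ω)

/-- Loynes sequence: M_0 = 0 and M_n = max(0, max_{1 ≤ j ≤ n} S_j). -/
def Mn (θi : Ω → Ω) (σ D V τ : Ω → ℝ) (n : ℕ) (ω : Ω) : ℝ :=
  (Finset.Icc 1 n).fold max 0 (fun j => Sj θi σ D V τ j ω)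

/-- M_∞ = max(0, sup_{j ≥ 1} S_j) ∈ [0,∞]. -/
def Minf (θi : Ω → Ω) (σ D V τ : Ω → ℝ) (ω : Ω) : EReal :=
  max 0 (⨆ j : ℕ, ((Sj θi σ D V τ (j + 1) ω : ℝ) : EReal))

/-- if E[V − τ] < 0 and Y solves the stationary equation Y ∘ θ = ψ(Y, ·)
P-a.s., then P( Y ≤ σ + D + V ) > 0. -/
theorem stationary_solution_below_sigma_D_V
    [MeasurableSpace Ω] (P : Measure Ω) [IsProbabilityMeasure P]
    (θ : Ω ≃ᵐ Ω) (herg : Ergodic (⇑θ) P)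
    (σ D V τ : Ω → ℝ)
    (hσm : Measurable σ) (hDm : Measurable D) (hVm : Measurable V) (hτm : Measurable τ)
    (hσ0 : ∀ ω, 0 ≤ σ ω) (hD0 : ∀ ω, 0 ≤ D ω) (hV0 : ∀ ω, 0 ≤ V ω) (hτ0 : ∀ ω, 0 ≤ τ ω)
    (hσi : Integrable σ P) (hDi : Integrable D P) (hVi : Integrable V P) (hτi : Integrable τ P)
    (hτpos : ∀ᵐ ω ∂P, 0 < τ ω)
    (hEV : ∫ ω, (V ω - τ ω) ∂P < 0)
    (Y : Ω → ℝ) (hYm : Measurable Y) (hY0 : ∀ ω, 0 ≤ Y ω)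
    (hYsol : ∀ᵐ ω ∂P, Y (θ ω) = psi σ D V τ (Y ω) ω) :
    0 < P {ω : Ω | Y ω ≤ σ ω + D ω + V ω} := by
  by_contra hcon
  push_neg at hcon
  have h0 : P {ω : Ω | Y ω ≤ σ ω + D ω + V ω} = 0 := le_antisymm hcon zero_le
  have hgt : ∀ᵐ ω ∂P, σ ω + D ω + V ω < Y ω := by
    have h1 : ∀ᵐ ω ∂P, ¬ Y ω ≤ σ ω + D ω + V ω := by
      rw [ae_iff]
      simpa using h0
    filter_upwards [h1] with ω h
    exact lt_of_not_ge h
  set g : Ω → ℝ := fun ω => V ω - τ ω with hg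
  have hgm : Measurable g := hVm.sub hτm
  have hgi : Integrable g P := hVi.sub hτi
  have hmap : Measure.map θ P = P := herg.toMeasurePreserving.map_eq
  have hgtθ : ∀ᵐ ω ∂P, σ (θ ω) + D (θ ω) + V (θ ω) < Y (θ ω) := by
    have hpmeas : MeasurableSet {ω : Ω | σ ω + D ω + V ω < Y ω} :=
      measurableSet_lt ((hσm.add hDm).add hVm) hYm
    have hgt' : ∀ᵐ ω ∂(Measure.map θ P), σ ω + D ω + V ω < Y ω := by rwa [hmap]
    exact (ae_map_iff θ.measurable.aemeasurable hpmeas).mp hgt'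
  have hae : ∀ᵐ ω ∂P, Y (θ ω) = Y ω + g ω := by
    filter_upwards [hgt, hgtθ, hYsol] with ω h1 h2 h4
    have hmax : max (Y ω + V ω) (σ ω + D ω + V ω) = Y ω + V ω :=
      max_eq_left (by linarith [hV0 ω])
    have hpos : 0 < Y (θ ω) :=
      lt_of_le_of_lt (by linarith [hσ0 (θ ω), hD0 (θ ω), hV0 (θ ω)]) h2
    rw [psi, hmax] at h4
    rcases le_or_gt (Y ω + V ω - τ ω) 0 with h | h
    · rw [max_eq_right h] at h4
      exact absurd h4 (by linarith)
    · rw [max_eq_left h.le] at h4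
      simp only [hg]
      linarith
  -- integrals of truncations agree
  have hint : ∀ n : ℕ,
      ∫ ω, (min (Y ω + g ω) (n : ℝ) - min (Y ω) (n : ℝ)) ∂P = 0 := by
    intro n
    have i1 : Integrable (fun ω => min (Y ω) (n : ℝ)) P := by
      apply Integrable.mono' (integrable_const (n : ℝ))
      · exact (hYm.min measurable_const).aestronglyMeasurable
      · filter_upwards with ω
        rw [Real.norm_eq_abs, abs_le]
        constructor
        · have := le_min (hY0 ω) (Nat.cast_nonneg n)
          have : (0 : ℝ) ≤ n := Nat.cast_nonneg n
          have hmin : (0 : ℝ) ≤ min (Y ω) (n : ℝ) := le_min (hY0 ω) this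
          linarith
        · exact min_le_right _ _
    have i2 : Integrable (fun ω => min (Y ω + g ω) (n : ℝ)) P := by
      apply Integrable.mono' ((integrable_const (n : ℝ)).add hgi.abs)
      · exact ((hYm.add hgm).min measurable_const).aestronglyMeasurable
      · filter_upwards with ω
        simp only [Pi.add_apply]
        rw [Real.norm_eq_abs, abs_le]
        have h1 : (0 : ℝ) ≤ n := Nat.cast_nonneg n
        have h2 : -(|g ω|) ≤ g ω := neg_abs_le _
        have h3 : 0 ≤ |g ω| := abs_nonneg _
        constructor
        · have : -((n : ℝ) + |g ω|) ≤ min (Y ω + g ω) (n : ℝ) := by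
            apply le_min
            · linarith [hY0 ω]
            · linarith
          linarith
        · have := min_le_right (Y ω + g ω) (n : ℝ)
          linarith
    have key : ∫ ω, min (Y ω + g ω) (n : ℝ) ∂P = ∫ ω, min (Y ω) (n : ℝ) ∂P := by
      have h := herg.toMeasurePreserving.integral_comp θ.measurableEmbedding
        (fun ω => min (Y ω) (n : ℝ))
      rw [← h]
      apply integral_congr_ae
      filter_upwards [hae] with ω hω
      rw [hω]
    rw [integral_sub i2 i1, key, sub_self]
  -- dominated convergence
  have hlim : Tendsto (fun n : ℕ => ∫ ω, (min (Y ω + g ω) (n : ℝ) - min (Y ω) (n : ℝ)) ∂P)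
      atTop (nhds (∫ ω, g ω ∂P)) := by
    apply tendsto_integral_of_dominated_convergence (fun ω => |g ω|)
    · intro n
      exact (((hYm.add hgm).min measurable_const).sub
        (hYm.min measurable_const)).aestronglyMeasurable
    · exact hgi.abs
    · intro n
      filter_upwards with ω
      rw [Real.norm_eq_abs]
      have h := abs_min_sub_min_le_max (Y ω + g ω) (n : ℝ) (Y ω) (n : ℝ)
      simpa using h
    · filter_upwards with ω
      apply tendsto_atTop_of_eventually_const
        (i₀ := Nat.ceil (max (Y ω) (Y ω + g ω)))
      intro n hn
      have hn' : max (Y ω) (Y ω + g ω) ≤ (n : ℝ) :=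
        le_trans (Nat.le_ceil _) (Nat.cast_le.mpr hn)
      have h1 : Y ω ≤ (n : ℝ) := le_trans (le_max_left _ _) hn'
      have h2 : Y ω + g ω ≤ (n : ℝ) := le_trans (le_max_right _ _) hn'
      rw [min_eq_left h1, min_eq_left h2]
      ring
  have hzero : ∫ ω, g ω ∂P = 0 := by
    have : Tendsto (fun _ : ℕ => (0 : ℝ)) atTop (nhds (∫ ω, g ω ∂P)) := by
      refine hlim.congr fun n => ?_
      rw [hint n]
    exact (tendsto_nhds_unique tendsto_const_nhds this).symm
  rw [hg] at hzero
  simp only at hzero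
  linarith [hEV, hzero]
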